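/- Let g : [0,∞) → [0,∞) be an increasing, unbounded, differentiable function with g(0) = 0, and for each integer Δ ≥ 0 let s_Δ = ⌈g^{-1}(Δ^{1/3})⌉. Let Δ₀ be a nonnegative integer and let b : ℕ → ℕ be a function such that for every integer Δ ≥ Δ₀: (1) binom(s_Δ, b(Δ)) ≤ Δ^{1/3}/4; (2) b(Δ) ≤ s_Δ/3; and (3) (log g(s))′ ≥ 2b(Δ)/s for every s ≥ s_Δ. If G is a graph of maximum degree Δ ≥ Δ₀ and every neighborhood subgraph F of G with s ≥ s_Δ vertices satisfies I(F) ≥ g(s), then G is b(Δ)-IS-rich. -/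

import Mathlib

open Filter MeasureTheory

namespace RandomCorr

/-- A correspondence assignment for a graph `G`: a list assignment `L` together with,
for each edge, a partial matching between the colors of its endpoints,
encoded as a symmetric relation `M` supported on edges of `G`. -/
structure CorrAssignment {V : Type} (G : SimpleGraph V) where
  L : V → Finset ℕ
  M : V → ℕ → V → ℕ → Prop
  symm : ∀ u i v j, M u i v j → M v j u i
  adj_of : ∀ u i v j, M u i v j → G.Adj u v
  mem_left : ∀ u i v j, M u i v j → i ∈ L u
  mem_right : ∀ u i v j, M u i v j → j ∈ L v
  matching : ∀ u i v j j', M u i v j → M u i v j' → j = j'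

variable {V : Type}

/-- An `(L,M)`-coloring. -/
def CorrAssignment.IsColoring {G : SimpleGraph V} (C : CorrAssignment G) (φ : V → ℕ) : Prop :=
  (∀ v, φ v ∈ C.L v) ∧ ∀ u v, ¬ C.M u (φ u) v (φ v)

/-- `(L,M)` is an `ℓ`-correspondence assignment. -/
def IsLAssignment {G : SimpleGraph V} (C : CorrAssignment G) (ℓ : ℕ) : Prop :=
  ∀ v, ℓ ≤ (C.L v).card

/-- The correspondence chromatic number of `G` is at most `ℓ`. -/
def corrChromAtMost (G : SimpleGraph V) (ℓ : ℕ) : Prop :=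
  ∀ C : CorrAssignment G, IsLAssignment C ℓ → ∃ φ, C.IsColoring φ

/-- Maximum degree of a finite graph. -/
noncomputable def maxDeg [Fintype V] (G : SimpleGraph V) : ℕ :=
  Finset.univ.sup fun v => (G.neighborSet v).ncard

/-- `binom(n, ≤ b) = ∑_{i=0}^{⌊b⌋} binom(n,i)`. -/
noncomputable def binomLe (n : ℕ) (b : ℝ) : ℕ :=
  ∑ i ∈ Finset.range (⌊b⌋₊ + 1), n.choose i

/-- The number of independent sets (including the empty set) of a subgraph `F`. -/
noncomputable def subIndepCount {W : Type} {H : SimpleGraph W} (F : H.Subgraph) : ℕ :=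
  {S : Set W | S ⊆ F.verts ∧ ∀ a ∈ S, ∀ b ∈ S, ¬ F.Adj a b}.ncard

/-- A neighborhood subgraph: a subgraph whose vertex set is contained in the
neighborhood of some vertex. -/
def IsNbrSubgraph {W : Type} {H : SimpleGraph W} (F : H.Subgraph) : Prop :=
  ∃ v, F.verts ⊆ H.neighborSet v

/-- `G` is `b`-IS-rich (with respect to maximum degree `Δ`): every `b`-large
neighborhood subgraph `F` satisfies `I(F) ≥ 2 · binom(|V(F)|, ≤ b)`. -/
def ISRich (G : SimpleGraph V) (b : ℝ) (Δ : ℕ) : Prop :=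
  ∀ F : G.Subgraph, IsNbrSubgraph F →
    (Δ : ℝ) ^ ((1 : ℝ)/3) < (binomLe F.verts.ncard b : ℝ) →
    2 * binomLe F.verts.ncard b ≤ subIndepCount F

/-- The cover graph of a correspondence assignment. -/
def coverGraph {G : SimpleGraph V} (C : CorrAssignment G) : SimpleGraph (V × ℕ) where
  Adj x y := C.M x.1 x.2 y.1 y.2
  symm := ⟨fun x y h => C.symm _ _ _ _ h⟩
  loopless := ⟨fun x h => G.loopless.irrefl x.1 (C.adj_of _ _ _ _ h)⟩

/-- A correspondence assignment is `b`-IS-rich (with respect to `Δ`) if every `b`-large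
neighborhood subgraph of its cover graph has at least `2 · binom(|V(F)|, ≤ b)`
independent sets. -/
def CorrAssignment.ISRich {G : SimpleGraph V} (C : CorrAssignment G) (b : ℝ) (Δ : ℕ) : Prop :=
  ∀ F : (coverGraph C).Subgraph, IsNbrSubgraph F →
    (Δ : ℝ) ^ ((1 : ℝ)/3) < (binomLe F.verts.ncard b : ℝ) →
    2 * binomLe F.verts.ncard b ≤ subIndepCount F

/-- Bernoulli measure on `Bool` with success probability `p` (truncated to `[0,1]`). -/
noncomputable def bern (p : ℝ) : Measure Bool :=
  (PMF.bernoulli (min (Real.toNNReal p) 1) (min_le_right _ _)).toMeasure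

/-- The Erdős–Rényi measure: each potential edge appears independently with
probability `p`. -/
noncomputable def erdosRenyi (n : ℕ) (p : ℝ) : Measure (Sym2 (Fin n) → Bool) :=
  Measure.pi fun _ => bern p

/-- The graph determined by an edge-indicator function. -/
def graphOf {n : ℕ} (ω : Sym2 (Fin n) → Bool) : SimpleGraph (Fin n) where
  Adj u v := u ≠ v ∧ ω s(u, v) = true
  symm := by
    constructor
    intro u v h
    refine ⟨h.1.symm, ?_⟩
    rw [Sym2.eq_swap]
    exact h.2
  loopless := ⟨fun u h => h.1 rfl⟩

/-- `G` has a complete minor of order `k`. -/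
def HasCompleteMinor (G : SimpleGraph V) (k : ℕ) : Prop :=
  ∃ B : Fin k → Set V,
    (∀ i, (B i).Nonempty) ∧
    (∀ i, (G.induce (B i)).Connected) ∧
    (∀ i j, i ≠ j → Disjoint (B i) (B j)) ∧
    (∀ i j, i ≠ j → ∃ u ∈ B i, ∃ v ∈ B j, G.Adj u v)

/-- The Hadwiger number: the largest `k` such that `K_k` is a minor of `G`. -/
noncomputable def hadwigerNumber [Fintype V] (G : SimpleGraph V) : ℕ :=
  sSup {k | HasCompleteMinor G k}

/-- Independence number. -/
noncomputable def indepNum [Fintype V] (G : SimpleGraph V) : ℕ :=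
  sSup {k | ∃ S : Finset V, S.card = k ∧ ∀ a ∈ S, ∀ b ∈ S, ¬ G.Adj a b}

/-- A partial `(L,M)`-coloring. -/
def IsPartialColoring {G : SimpleGraph V} (C : CorrAssignment G) (φ : V → Option ℕ) : Prop :=
  (∀ v c, φ v = some c → c ∈ C.L v) ∧
  ∀ u v cu cv, φ u = some cu → φ v = some cv → ¬ C.M u cu v cv

/-- The number of colors available at `u` with respect to a partial coloring `φ`. -/
noncomputable def availCount {G : SimpleGraph V} (C : CorrAssignment G)
    (φ : V → Option ℕ) (u : V) : ℕ :=
  {c : ℕ | c ∈ C.L u ∧ ∀ v cv, φ v = some cv → ¬ C.M u c v cv}.ncard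

/-- The event `A_u`: `u` is uncolored and fewer than `Δ^{7/12}` colors are available
at `u`. -/
def EventA {G : SimpleGraph V} (C : CorrAssignment G) (Δ : ℕ) (u : V)
    (φ : V → Option ℕ) : Prop :=
  φ u = none ∧ (availCount C φ u : ℝ) < (Δ : ℝ) ^ ((7 : ℝ)/12)

/-- The number of independent sets of `F` of size at least `m`. -/
noncomputable def indepGeCount {W : Type} {H : SimpleGraph W} (F : H.Subgraph) (m : ℕ) : ℕ :=
  {S : Set W | S ⊆ F.verts ∧ (∀ a ∈ S, ∀ b ∈ S, ¬ F.Adj a b) ∧ m ≤ S.ncard}.ncard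

/-- The median size `ᾱ(F)` of an independent set: the largest `m` such that at least
half of the independent sets of `F` have size at least `m`. -/
noncomputable def medianIndep {W : Type} {H : SimpleGraph W} (F : H.Subgraph) : ℕ :=
  sSup {m : ℕ | subIndepCount F ≤ 2 * indepGeCount F m}

end RandomCorr

/-- `s_Δ = ⌈g⁻¹(Δ^{1/3})⌉`: the least natural number `s` with `g(s) ≥ Δ^{1/3}`. -/
noncomputable def RandomCorr.sNat (g : ℝ → ℝ) (Δ : ℕ) : ℕ :=
  sInf {s : ℕ | (Δ : ℝ) ^ ((1 : ℝ)/3) ≤ g s}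


lemma auxSumChooseLe (m : ℕ) : ∀ bb : ℕ, 3 * bb ≤ m →
    ∑ i ∈ Finset.range (bb + 1), m.choose i ≤ 2 * m.choose bb := by
  intro bb
  induction bb with
  | zero => simp
  | succ k ih =>
    intro h
    have hk3 : 3 * k ≤ m := by omega
    have hstep : 2 * m.choose k ≤ m.choose (k + 1) := by
      have heq := Nat.choose_succ_right_eq m k
      have hmk : 2 * (k + 1) ≤ m - k := by omega
      have hmul : 2 * m.choose k * (k + 1) ≤ m.choose (k + 1) * (k + 1) := by
        rw [heq]
        calc 2 * m.choose k * (k + 1) = m.choose k * (2 * (k + 1)) := by ring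
          _ ≤ m.choose k * (m - k) := Nat.mul_le_mul_left _ hmk
      exact Nat.le_of_mul_le_mul_right hmul (Nat.succ_pos k)
    have := ih hk3
    rw [Finset.sum_range_succ]
    omega

lemma auxTerm (s n i : ℕ) (hsn : s ≤ n) (hi : 3 * i + 3 ≤ s) :
    (n - i) * s ^ 2 ≤ (s - i) * n ^ 2 := by
  obtain ⟨s', rfl⟩ : ∃ s', s = i + s' := ⟨s - i, by omega⟩
  obtain ⟨n', rfl⟩ : ∃ n', n = i + n' := ⟨n - i, by omega⟩
  have h1 : i ≤ s' := by omega
  have h2 : s' ≤ n' := by omega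
  have e1 : i + s' - i = s' := by omega
  have e2 : i + n' - i = n' := by omega
  rw [e1, e2]
  zify
  have ha : (0:ℤ) ≤ (n':ℤ) - (s':ℤ) := by
    have : (s':ℤ) ≤ (n':ℤ) := by exact_mod_cast h2
    linarith
  have hb : (0:ℤ) ≤ (s':ℤ) * (n':ℤ) - (i:ℤ) * (i:ℤ) := by
    have hi1 : (i:ℤ) ≤ (s':ℤ) := by exact_mod_cast h1
    have hi2 : (i:ℤ) ≤ (n':ℤ) := by exact_mod_cast h1.trans h2
    have h0 : (0:ℤ) ≤ (i:ℤ) := Int.natCast_nonneg i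
    nlinarith
  nlinarith [mul_nonneg ha hb]

lemma auxChooseMul (s n bb : ℕ) (hsn : s ≤ n) (hb : 3 * bb ≤ s) :
    n.choose bb * s ^ (2 * bb) ≤ s.choose bb * n ^ (2 * bb) := by
  have key : n.descFactorial bb * s ^ (2 * bb) ≤ s.descFactorial bb * n ^ (2 * bb) := by
    rw [Nat.descFactorial_eq_prod_range, Nat.descFactorial_eq_prod_range]
    have e1 : ∀ m : ℕ, m ^ (2 * bb) = ∏ _i ∈ Finset.range bb, m ^ 2 := by
      intro m
      rw [Finset.prod_const, Finset.card_range, pow_mul]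
    rw [e1, e1, ← Finset.prod_mul_distrib, ← Finset.prod_mul_distrib]
    refine Finset.prod_le_prod (fun i _ => Nat.zero_le _) (fun i hi => ?_)
    have hib := Finset.mem_range.mp hi
    exact auxTerm s n i hsn (by omega)
  have h' : bb.factorial * (n.choose bb * s ^ (2 * bb)) ≤
      bb.factorial * (s.choose bb * n ^ (2 * bb)) := by
    calc bb.factorial * (n.choose bb * s ^ (2 * bb))
        = n.descFactorial bb * s ^ (2 * bb) := by
          rw [Nat.descFactorial_eq_factorial_mul_choose]; ring
      _ ≤ s.descFactorial bb * n ^ (2 * bb) := key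
      _ = bb.factorial * (s.choose bb * n ^ (2 * bb)) := by
          rw [Nat.descFactorial_eq_factorial_mul_choose]; ring
  exact Nat.le_of_mul_le_mul_left h' bb.factorial_pos

set_option maxHeartbeats 1000000 in
/-- Sufficient conditions on `g` and `b` under which a lower bound
`I(F) ≥ g(|V(F)|)` on the number of independent sets of all large neighborhood subgraphs
implies that `G` is `b(Δ)`-IS-rich. -/
theorem isRich_of_indepCount_lower_bound
    (g : ℝ → ℝ)
    (hg_mono : StrictMonoOn g (Set.Ici 0))
    (hg_unbounded : Filter.Tendsto g Filter.atTop Filter.atTop)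
    (hg_diff : DifferentiableOn ℝ g (Set.Ici 0))
    (hg_nonneg : ∀ x : ℝ, 0 ≤ x → 0 ≤ g x)
    (hg0 : g 0 = 0)
    (Δ₀ : ℕ) (b : ℕ → ℕ)
    (h1 : ∀ Δ : ℕ, Δ₀ ≤ Δ →
      (((RandomCorr.sNat g Δ).choose (b Δ) : ℝ)) ≤ (Δ : ℝ) ^ ((1 : ℝ)/3) / 4)
    (h2 : ∀ Δ : ℕ, Δ₀ ≤ Δ → (b Δ : ℝ) ≤ (RandomCorr.sNat g Δ : ℝ) / 3)
    (h3 : ∀ Δ : ℕ, Δ₀ ≤ Δ → ∀ s : ℝ, (RandomCorr.sNat g Δ : ℝ) ≤ s →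
      2 * (b Δ : ℝ) / s ≤ deriv (fun x => Real.log (g x)) s)
    (V : Type) [Fintype V] (G : SimpleGraph V) (Δ : ℕ)
    (hΔ : RandomCorr.maxDeg G = Δ) (hΔ₀ : Δ₀ ≤ Δ)
    (hI : ∀ F : G.Subgraph, RandomCorr.IsNbrSubgraph F →
      RandomCorr.sNat g Δ ≤ F.verts.ncard →
      g (F.verts.ncard : ℝ) ≤ (RandomCorr.subIndepCount F : ℝ)) :
    RandomCorr.ISRich G (b Δ : ℝ) Δ := by
  intro F hF hlarge
  set s : ℕ := RandomCorr.sNat g Δ with hs_def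
  set n : ℕ := F.verts.ncard with hn_def
  have hbinom : ∀ m : ℕ, RandomCorr.binomLe m ((b Δ : ℕ) : ℝ) =
      ∑ i ∈ Finset.range (b Δ + 1), m.choose i := by
    intro m
    simp [RandomCorr.binomLe, Nat.floor_natCast]
  have hb3s : 3 * b Δ ≤ s := by
    have h2' := h2 Δ hΔ₀
    have : (3 : ℝ) * (b Δ : ℝ) ≤ (s : ℝ) := by
      rw [hs_def]; linarith
    exact_mod_cast this
  have hbs : b Δ ≤ s := by omega
  have hchoose_pos : 0 < s.choose (b Δ) := Nat.choose_pos hbs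
  have h1' := h1 Δ hΔ₀
  rw [← hs_def] at h1'
  have h4 : (4 : ℝ) ≤ (Δ : ℝ) ^ ((1 : ℝ)/3) := by
    have hone : (1 : ℝ) ≤ (s.choose (b Δ) : ℝ) := by exact_mod_cast hchoose_pos
    linarith
  -- g s ≥ Δ^{1/3}
  have hgs : (Δ : ℝ) ^ ((1 : ℝ)/3) ≤ g s := by
    have hne : {t : ℕ | (Δ : ℝ) ^ ((1 : ℝ)/3) ≤ g t}.Nonempty := by
      obtain ⟨x, hx1, hx2⟩ :=
        ((hg_unbounded.eventually_ge_atTop ((Δ : ℝ) ^ ((1 : ℝ)/3))).and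
          (Filter.eventually_ge_atTop (0 : ℝ))).exists
      refine ⟨⌈x⌉₊, ?_⟩
      have hxc : x ≤ (⌈x⌉₊ : ℝ) := Nat.le_ceil x
      have := hg_mono.monotoneOn (Set.mem_Ici.mpr hx2)
        (Set.mem_Ici.mpr (hx2.trans hxc)) hxc
      exact le_trans hx1 this
    exact Nat.sInf_mem hne
  have hs_pos : 0 < s := by
    rcases Nat.eq_zero_or_pos s with h0 | h0
    · exfalso
      rw [h0] at hgs
      simp only [Nat.cast_zero] at hgs
      rw [hg0] at hgs
      linarith
    · exact h0
  -- Step A: s ≤ n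
  have hsn : s ≤ n := by
    by_contra hcon
    push_neg at hcon
    have hmono' : RandomCorr.binomLe n ((b Δ : ℕ) : ℝ) ≤
        ∑ i ∈ Finset.range (b Δ + 1), s.choose i := by
      rw [hbinom]
      exact Finset.sum_le_sum fun i _ => Nat.choose_le_choose i hcon.le
    have hsum : ∑ i ∈ Finset.range (b Δ + 1), s.choose i ≤ 2 * s.choose (b Δ) :=
      auxSumChooseLe s (b Δ) hb3s
    have hchain : (RandomCorr.binomLe n ((b Δ : ℕ) : ℝ) : ℝ) ≤ 2 * (s.choose (b Δ) : ℝ) := by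
      exact_mod_cast hmono'.trans hsum
    have hlarge' := hlarge
    linarith
  -- positivity setup
  have hrs_pos : (0 : ℝ) < (s : ℝ) := by exact_mod_cast hs_pos
  have hrn : (s : ℝ) ≤ (n : ℝ) := by exact_mod_cast hsn
  have hrn_pos : (0 : ℝ) < (n : ℝ) := lt_of_lt_of_le hrs_pos hrn
  have hgpos : ∀ x : ℝ, (s : ℝ) ≤ x → 0 < g x := by
    intro x hx
    have hgsx : g s ≤ g x :=
      hg_mono.monotoneOn (Set.mem_Ici.mpr hrs_pos.le)
        (Set.mem_Ici.mpr (hrs_pos.le.trans hx)) hx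
    linarith
  set c : ℝ := 2 * (b Δ : ℝ) with hc_def
  have hc_nonneg : 0 ≤ c := by positivity
  -- Step B: growth of g via derivative condition
  have hgd : ∀ x : ℝ, (s : ℝ) ≤ x → DifferentiableAt ℝ g x := by
    intro x hx
    exact (hg_diff x (Set.mem_Ici.mpr (hrs_pos.le.trans hx))).differentiableAt
      (Ici_mem_nhds (lt_of_lt_of_le hrs_pos hx))
  have hmonoh : MonotoneOn (fun x => Real.log (g x) - c * Real.log x)
      (Set.Icc (s : ℝ) (n : ℝ)) := by
    apply monotoneOn_of_deriv_nonneg (convex_Icc _ _)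
    · apply ContinuousOn.sub
      · apply ContinuousOn.log
        · exact hg_diff.continuousOn.mono (fun x hx => le_trans hrs_pos.le hx.1)
        · intro x hx
          exact (hgpos x hx.1).ne'
      · apply continuousOn_const.mul
        apply Real.continuousOn_log.mono
        intro x hx
        exact (lt_of_lt_of_le hrs_pos hx.1).ne'
    · rw [interior_Icc]
      intro x hx
      have hx0 : (0 : ℝ) < x := lt_of_lt_of_le hrs_pos hx.1.le
      exact (((hgd x hx.1.le).log (hgpos x hx.1.le).ne').sub
        ((Real.differentiableAt_log hx0.ne').const_mul c)).differentiableWithinAt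
    · rw [interior_Icc]
      intro x hx
      have hx0 : (0 : ℝ) < x := lt_of_lt_of_le hrs_pos hx.1.le
      have hlogd : DifferentiableAt ℝ (fun y => Real.log (g y)) x :=
        (hgd x hx.1.le).log (hgpos x hx.1.le).ne'
      have hld : DifferentiableAt ℝ (fun y => c * Real.log y) x :=
        (Real.differentiableAt_log hx0.ne').const_mul c
      have hder : deriv (fun y => Real.log (g y) - c * Real.log y) x =
          deriv (fun y => Real.log (g y)) x - c * x⁻¹ := by
        rw [deriv_fun_sub hlogd hld, deriv_const_mul _ (Real.differentiableAt_log hx0.ne'),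
          Real.deriv_log]
      rw [hder]
      have h3' := h3 Δ hΔ₀ x hx.1.le
      rw [hc_def]
      have : 2 * (b Δ : ℝ) / x = 2 * (b Δ : ℝ) * x⁻¹ := by ring
      rw [← this]
      linarith
  have happly : Real.log (g (s : ℝ)) - c * Real.log (s : ℝ) ≤
      Real.log (g (n : ℝ)) - c * Real.log (n : ℝ) :=
    hmonoh (Set.mem_Icc.mpr ⟨le_refl _, hrn⟩) (Set.mem_Icc.mpr ⟨hrn, le_refl _⟩) hrn
  have hdiv_pos : (0 : ℝ) < (n : ℝ) / (s : ℝ) := div_pos hrn_pos hrs_pos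
  have hgrowth : g (s : ℝ) * ((n : ℝ) / (s : ℝ)) ^ c ≤ g (n : ℝ) := by
    have hlog : Real.log (g (s : ℝ) * ((n : ℝ) / (s : ℝ)) ^ c) ≤ Real.log (g (n : ℝ)) := by
      rw [Real.log_mul (hgpos _ le_rfl).ne' (Real.rpow_pos_of_pos hdiv_pos c).ne',
        Real.log_rpow hdiv_pos, Real.log_div hrn_pos.ne' hrs_pos.ne']
      linarith
    exact (Real.log_le_log_iff (mul_pos (hgpos _ le_rfl) (Real.rpow_pos_of_pos hdiv_pos c)) (hgpos _ hrn)).mp hlog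
  -- choose growth
  have hcm := auxChooseMul s n (b Δ) hsn hb3s
  have hcm' : (n.choose (b Δ) : ℝ) * ((s : ℝ)) ^ (2 * b Δ) ≤
      (s.choose (b Δ) : ℝ) * ((n : ℝ)) ^ (2 * b Δ) := by exact_mod_cast hcm
  have hpow_pos : (0 : ℝ) < ((s : ℝ)) ^ (2 * b Δ) := pow_pos hrs_pos _
  have hcm2 : (n.choose (b Δ) : ℝ) ≤ (s.choose (b Δ) : ℝ) * ((n : ℝ) / (s : ℝ)) ^ c := by
    have hrpow : ((n : ℝ) / (s : ℝ)) ^ c = ((n : ℝ) / (s : ℝ)) ^ (2 * b Δ) := by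
      rw [hc_def]
      rw [show (2 : ℝ) * (b Δ : ℝ) = ((2 * b Δ : ℕ) : ℝ) by push_cast; ring]
      exact Real.rpow_natCast _ _
    rw [hrpow, div_pow, ← mul_div_assoc, le_div_iff₀ hpow_pos]
    exact hcm'
  -- final chain
  have hsum_n : RandomCorr.binomLe n ((b Δ : ℕ) : ℝ) ≤ 2 * n.choose (b Δ) := by
    rw [hbinom]
    exact auxSumChooseLe n (b Δ) (hb3s.trans hsn)
  have hIF := hI F hF (by rw [← hn_def]; exact hsn)
  rw [← hn_def] at hIF
  obtain ⟨P, hP_def, hP_pos, hcm3, hgrowth'⟩ :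
      ∃ P : ℝ, P = ((n : ℝ) / (s : ℝ)) ^ c ∧ 0 < P ∧
        (n.choose (b Δ) : ℝ) ≤ (s.choose (b Δ) : ℝ) * P ∧ g (s : ℝ) * P ≤ g (n : ℝ) :=
    ⟨_, rfl, Real.rpow_pos_of_pos hdiv_pos c, hcm2, hgrowth⟩
  have hfinal : (4 : ℝ) * (n.choose (b Δ) : ℝ) ≤ (RandomCorr.subIndepCount F : ℝ) := by
    have step1 : (4 : ℝ) * (n.choose (b Δ) : ℝ) ≤
        (4 * (s.choose (b Δ) : ℝ)) * P := by nlinarith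
    have step2 : (4 * (s.choose (b Δ) : ℝ)) * P ≤ (Δ : ℝ) ^ ((1 : ℝ)/3) * P := by
      have h41 : (4 : ℝ) * (s.choose (b Δ) : ℝ) ≤ (Δ : ℝ) ^ ((1 : ℝ)/3) := by linarith
      exact mul_le_mul_of_nonneg_right h41 hP_pos.le
    have step3 : (Δ : ℝ) ^ ((1 : ℝ)/3) * P ≤ g (s : ℝ) * P :=
      mul_le_mul_of_nonneg_right hgs hP_pos.le
    linarith
  have hgoal : (2 * RandomCorr.binomLe n ((b Δ : ℕ) : ℝ) : ℝ) ≤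
      (RandomCorr.subIndepCount F : ℝ) := by
    have : (RandomCorr.binomLe n ((b Δ : ℕ) : ℝ) : ℝ) ≤ 2 * (n.choose (b Δ) : ℝ) := by
      exact_mod_cast hsum_n
    push_cast
    linarith
  exact_mod_cast hgoal
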